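/- Suppose R ⪰ 0, γ ≥ 0, and set P_u := diag(−2 I_{n₂}, 2γ² I_{n₂}). If there exist a symmetric X ∈ ℝ^{n×n} with X ≻ 0 and τ > 0 such that L̃(X, τ) ≺ 0 (negative definite), then for every sequence of maps Δ_k : ℝ^{n₂} → ℝ^{n₂} (k ∈ ℕ) satisfying ‖Δ_k(v)‖ ≤ γ ‖v‖ for all v and k, the perturbed lifted closed loop satisfies quadratic performance specified by P̃ with a margin ε > 0 that can be chosen independently of the maps Δ_k: (i) for w̃ ≡ 0 every trajectory satisfies η(k) → 0 as k → ∞; (ii) for every trajectory with η(0) = 0 and square-summable w̃, the series Σ_k (w̃(k), z̃(k))ᵀ P̃ (w̃(k), z̃(k)) converges and its value is ≤ −ε Σ_k ‖w̃(k)‖². -/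

import Mathlib

open Matrix Filter Topology Kronecker

/-- Lifted input matrix `B̃ = [A^{T-1}B, A^{T-2}B, …, B]`. -/
noncomputable def Btil {St : Type*} [Fintype St] [DecidableEq St] {m : ℕ} (T : ℕ) (A : Matrix St St ℝ)
    (B : Matrix St (Fin m) ℝ) : Matrix St (Fin T × Fin m) ℝ :=
  Matrix.of fun i p => (A ^ (T - 1 - (p.1 : ℕ)) * B) i p.2

/-- Lifted output matrix `C̃` with block rows `C, CA, …, CA^{T-1}`. -/
noncomputable def Ctil {St : Type*} [Fintype St] [DecidableEq St] {q : ℕ} (T : ℕ) (A : Matrix St St ℝ)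
    (C : Matrix (Fin q) St ℝ) : Matrix (Fin T × Fin q) St ℝ :=
  Matrix.of fun p j => (C * A ^ (p.1 : ℕ)) p.2 j

/-- Lifted feedthrough matrix `D̃`, block lower triangular with `(i,j)` block `D` if
`i = j`, `C A^{i-j-1} B` if `i > j`, and `0` if `i < j`. -/
noncomputable def Dtil {St : Type*} [Fintype St] [DecidableEq St] {m q : ℕ} (T : ℕ) (A : Matrix St St ℝ)
    (B : Matrix St (Fin m) ℝ) (C : Matrix (Fin q) St ℝ)
    (D : Matrix (Fin q) (Fin m) ℝ) : Matrix (Fin T × Fin q) (Fin T × Fin m) ℝ :=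
  Matrix.of fun p r =>
    if (p.1 : ℕ) = (r.1 : ℕ) then D p.2 r.2
    else if (r.1 : ℕ) < (p.1 : ℕ) then
      (C * A ^ ((p.1 : ℕ) - (r.1 : ℕ) - 1) * B) p.2 r.2
    else 0

/-- The lifted performance matrix `P̃ = [[I_T ⊗ Q, I_T ⊗ S], [I_T ⊗ Sᵀ, I_T ⊗ R]]`. -/
noncomputable def Ptil {m q : ℕ} (T : ℕ) (Q : Matrix (Fin m) (Fin m) ℝ)
    (S : Matrix (Fin m) (Fin q) ℝ) (R : Matrix (Fin q) (Fin q) ℝ) :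
    Matrix ((Fin T × Fin m) ⊕ (Fin T × Fin q)) ((Fin T × Fin m) ⊕ (Fin T × Fin q)) ℝ :=
  Matrix.fromBlocks ((1 : Matrix (Fin T) (Fin T) ℝ) ⊗ₖ Q)
    ((1 : Matrix (Fin T) (Fin T) ℝ) ⊗ₖ S)
    ((1 : Matrix (Fin T) (Fin T) ℝ) ⊗ₖ Sᵀ)
    ((1 : Matrix (Fin T) (Fin T) ℝ) ⊗ₖ R)

/-- The uncertainty input matrix `B_u = [0; A_c]`, where `A_c` is the lower-right
(controller) block of `A`. -/
noncomputable def Bu {n₁ n₂ : ℕ} (A : Matrix (Fin n₁ ⊕ Fin n₂) (Fin n₁ ⊕ Fin n₂) ℝ) :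
    Matrix (Fin n₁ ⊕ Fin n₂) (Fin n₂) ℝ :=
  Matrix.of fun i j =>
    Sum.elim (fun _ : Fin n₁ => (0 : ℝ)) (fun i₂ => A (Sum.inr i₂) (Sum.inr j)) i

/-- The uncertainty output matrix `C_u = [0, I]` selecting the controller state. -/
noncomputable def Cu (n₁ n₂ : ℕ) : Matrix (Fin n₂) (Fin n₁ ⊕ Fin n₂) ℝ :=
  Matrix.of fun i j =>
    Sum.elim (fun _ : Fin n₁ => (0 : ℝ)) (fun j₂ => if i = j₂ then 1 else 0) j

/-- The lifted uncertainty input matrix `B̃_u = A^{T-1} B_u`. -/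
noncomputable def Butil {n₁ n₂ : ℕ} (T : ℕ)
    (A : Matrix (Fin n₁ ⊕ Fin n₂) (Fin n₁ ⊕ Fin n₂) ℝ) :
    Matrix (Fin n₁ ⊕ Fin n₂) (Fin n₂) ℝ :=
  A ^ (T - 1) * Bu A

/-- The lifted uncertainty feedthrough matrix `D̃_u` with block rows
`0, C B_u, C A B_u, …, C A^{T-2} B_u`. -/
noncomputable def Dutil {n₁ n₂ q : ℕ} (T : ℕ)
    (A : Matrix (Fin n₁ ⊕ Fin n₂) (Fin n₁ ⊕ Fin n₂) ℝ)
    (C : Matrix (Fin q) (Fin n₁ ⊕ Fin n₂) ℝ) : Matrix (Fin T × Fin q) (Fin n₂) ℝ :=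
  Matrix.of fun p j =>
    if (p.1 : ℕ) = 0 then 0 else (C * A ^ ((p.1 : ℕ) - 1) * Bu A) p.2 j

/-- The robust LMI matrix `L̃(X, τ)` combining the lifted dynamics, the lifted
performance multiplier `P̃`, and the uncertainty multiplier `τ P_u`. -/
noncomputable def Ltil {n₁ n₂ m q : ℕ} (T : ℕ)
    (A : Matrix (Fin n₁ ⊕ Fin n₂) (Fin n₁ ⊕ Fin n₂) ℝ)
    (B : Matrix (Fin n₁ ⊕ Fin n₂) (Fin m) ℝ)
    (C : Matrix (Fin q) (Fin n₁ ⊕ Fin n₂) ℝ) (D : Matrix (Fin q) (Fin m) ℝ)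
    (Q : Matrix (Fin m) (Fin m) ℝ) (S : Matrix (Fin m) (Fin q) ℝ)
    (R : Matrix (Fin q) (Fin q) ℝ)
    (Pu : Matrix (Fin n₂ ⊕ Fin n₂) (Fin n₂ ⊕ Fin n₂) ℝ)
    (X : Matrix (Fin n₁ ⊕ Fin n₂) (Fin n₁ ⊕ Fin n₂) ℝ) (τ : ℝ) :
    Matrix (((Fin n₁ ⊕ Fin n₂)) ⊕ ((Fin T × Fin m) ⊕ Fin n₂))
      (((Fin n₁ ⊕ Fin n₂)) ⊕ ((Fin T × Fin m) ⊕ Fin n₂)) ℝ :=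
  (Matrix.fromBlocks (1 : Matrix (Fin n₁ ⊕ Fin n₂) (Fin n₁ ⊕ Fin n₂) ℝ) 0 (A ^ T) (Matrix.fromCols (Btil T A B) (Butil T A)))ᵀ *
      Matrix.fromBlocks (-X) 0 0 X *
      Matrix.fromBlocks (1 : Matrix (Fin n₁ ⊕ Fin n₂) (Fin n₁ ⊕ Fin n₂) ℝ) 0 (A ^ T) (Matrix.fromCols (Btil T A B) (Butil T A))
    + (Matrix.fromBlocks 0 (Matrix.fromCols (1 : Matrix (Fin T × Fin m) (Fin T × Fin m) ℝ) 0) (Ctil T A C)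
        (Matrix.fromCols (Dtil T A B C D) (Dutil T A C)))ᵀ *
      Ptil T Q S R *
      Matrix.fromBlocks 0 (Matrix.fromCols (1 : Matrix (Fin T × Fin m) (Fin T × Fin m) ℝ) 0) (Ctil T A C)
        (Matrix.fromCols (Dtil T A B C D) (Dutil T A C))
    + (Matrix.fromBlocks 0 (Matrix.fromCols (0 : Matrix (Fin n₂) (Fin T × Fin m) ℝ) 1) (Cu n₁ n₂) 0)ᵀ *
      (τ • Pu) *
      Matrix.fromBlocks 0 (Matrix.fromCols (0 : Matrix (Fin n₂) (Fin T × Fin m) ℝ) 1) (Cu n₁ n₂) 0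

/-- Trajectories of the perturbed lifted closed loop
`η(k+1) = Ã η(k) + B̃ w̃(k) + B̃_u Δ_k(C_u η(k))`,
`z̃(k) = C̃ η(k) + D̃ w̃(k) + D̃_u Δ_k(C_u η(k))`. -/
def PerturbedTraj {n₁ n₂ m q : ℕ} (T : ℕ)
    (A : Matrix (Fin n₁ ⊕ Fin n₂) (Fin n₁ ⊕ Fin n₂) ℝ)
    (B : Matrix (Fin n₁ ⊕ Fin n₂) (Fin m) ℝ)
    (C : Matrix (Fin q) (Fin n₁ ⊕ Fin n₂) ℝ) (D : Matrix (Fin q) (Fin m) ℝ)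
    (Δ : ℕ → (Fin n₂ → ℝ) → (Fin n₂ → ℝ))
    (η : ℕ → (Fin n₁ ⊕ Fin n₂) → ℝ) (w : ℕ → Fin T × Fin m → ℝ)
    (z : ℕ → Fin T × Fin q → ℝ) : Prop :=
  ∀ k : ℕ,
    η (k + 1) = (A ^ T).mulVec (η k) + (Btil T A B).mulVec (w k) +
        (Butil T A).mulVec (Δ k ((Cu n₁ n₂).mulVec (η k))) ∧
    z k = (Ctil T A C).mulVec (η k) + (Dtil T A B C D).mulVec (w k) +
        (Dutil T A C).mulVec (Δ k ((Cu n₁ n₂).mulVec (η k)))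


variable {ι : Type*} [Fintype ι]

private lemma dot_self_nonneg' (x : ι → ℝ) : 0 ≤ x ⬝ᵥ x :=
  Finset.sum_nonneg fun i _ => mul_self_nonneg (x i)

private lemma sqrt_dot_sq (x : ι → ℝ) : Real.sqrt (x ⬝ᵥ x) ^ 2 = x ⬝ᵥ x :=
  Real.sq_sqrt (dot_self_nonneg' x)

private lemma abs_le_sqrt_dot (x : ι → ℝ) (i : ι) : |x i| ≤ Real.sqrt (x ⬝ᵥ x) := by
  have h1 : x i ^ 2 ≤ x ⬝ᵥ x := by
    have := Finset.single_le_sum (f := fun j => x j * x j)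
      (fun j _ => mul_self_nonneg (x j)) (Finset.mem_univ i)
    simpa [dotProduct, sq] using this
  calc |x i| = Real.sqrt (x i ^ 2) := by rw [Real.sqrt_sq_eq_abs]
    _ ≤ Real.sqrt (x ⬝ᵥ x) := Real.sqrt_le_sqrt h1

private lemma bilin_bound (M : Matrix ι ι ℝ) :
    ∃ c : ℝ, 0 ≤ c ∧ ∀ x y : ι → ℝ,
      |x ⬝ᵥ M *ᵥ y| ≤ c * Real.sqrt (x ⬝ᵥ x) * Real.sqrt (y ⬝ᵥ y) := by
  refine ⟨∑ i, ∑ j, |M i j|,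
    Finset.sum_nonneg fun i _ => Finset.sum_nonneg fun j _ => abs_nonneg _, fun x y => ?_⟩
  have h : x ⬝ᵥ M *ᵥ y = ∑ i, ∑ j, x i * M i j * y j := by
    simp [dotProduct, Matrix.mulVec, Finset.mul_sum, mul_assoc]
  rw [h]
  calc |∑ i, ∑ j, x i * M i j * y j|
      ≤ ∑ i, ∑ j, |x i * M i j * y j| :=
        (Finset.abs_sum_le_sum_abs _ _).trans
          (Finset.sum_le_sum fun i _ => Finset.abs_sum_le_sum_abs _ _)
    _ ≤ ∑ i, ∑ j, |M i j| * (Real.sqrt (x ⬝ᵥ x) * Real.sqrt (y ⬝ᵥ y)) := by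
        refine Finset.sum_le_sum fun i _ => Finset.sum_le_sum fun j _ => ?_
        rw [abs_mul, abs_mul]
        have hx := abs_le_sqrt_dot x i
        have hy := abs_le_sqrt_dot y j
        have h1 : |x i| * |y j| ≤ Real.sqrt (x ⬝ᵥ x) * Real.sqrt (y ⬝ᵥ y) :=
          mul_le_mul hx hy (abs_nonneg _) (Real.sqrt_nonneg _)
        nlinarith [abs_nonneg (M i j), abs_nonneg (x i), abs_nonneg (y j)]
    _ = (∑ i, ∑ j, |M i j|) * Real.sqrt (x ⬝ᵥ x) * Real.sqrt (y ⬝ᵥ y) := by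
        simp [Finset.sum_mul, mul_assoc]

private lemma exists_quad_lower [DecidableEq ι] (M : Matrix ι ι ℝ) (hM : M.PosDef) :
    ∃ ε : ℝ, 0 < ε ∧ ∀ x : ι → ℝ, ε * (x ⬝ᵥ x) ≤ x ⬝ᵥ M *ᵥ x := by
  cases isEmpty_or_nonempty ι with
  | inl h => exact ⟨1, one_pos, fun x => by simp [dotProduct, Matrix.mulVec]⟩
  | inr h =>
    classical
    set f : EuclideanSpace ℝ ι → ℝ := fun x => x ⬝ᵥ M *ᵥ x with hf
    have hcont : Continuous f := by
      have : f = fun x : EuclideanSpace ℝ ι =>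
          ∑ i, x i * ∑ j, M i j * x j := by
        funext x; simp [f, dotProduct, Matrix.mulVec]
      rw [this]
      exact continuous_finset_sum _ fun i _ =>
        ((continuous_apply i).comp (PiLp.continuous_ofLp 2 _)).mul
          (continuous_finset_sum _ fun j _ =>
            continuous_const.mul ((continuous_apply j).comp (PiLp.continuous_ofLp 2 _)))
    haveI : Nontrivial (EuclideanSpace ℝ ι) := by
      refine ⟨EuclideanSpace.single (Classical.arbitrary ι) (1:ℝ), 0, fun hc => ?_⟩
      have : (EuclideanSpace.single (Classical.arbitrary ι) (1:ℝ)) (Classical.arbitrary ι)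
          = (0 : EuclideanSpace ℝ ι) (Classical.arbitrary ι) := by rw [hc]
      simp [EuclideanSpace.single_apply] at this
    have hne : (Metric.sphere (0 : EuclideanSpace ℝ ι) 1).Nonempty :=
      NormedSpace.sphere_nonempty.mpr zero_le_one
    obtain ⟨x₀, hx₀mem, hx₀min⟩ :=
      (isCompact_sphere (0 : EuclideanSpace ℝ ι) 1).exists_isMinOn hne hcont.continuousOn
    have hx₀norm : ‖x₀‖ = 1 := by simpa using hx₀mem
    have hx₀ne : x₀ ≠ 0 := by
      intro hc; rw [hc] at hx₀norm; simp at hx₀norm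
    have hεpos : 0 < f x₀ := by
      let x₀' : ι → ℝ := x₀
      have hne' : x₀' ≠ 0 := by simpa [x₀'] using hx₀ne
      have := hM.dotProduct_mulVec_pos hne'
      rwa [show star x₀' = x₀' from funext fun i => star_trivial _] at this
    refine ⟨f x₀, hεpos, fun x => ?_⟩
    by_cases hx : x = 0
    · simp [hx, dotProduct]
    · set y : EuclideanSpace ℝ ι := WithLp.toLp 2 x with hy
      have hyne : y ≠ 0 := by simpa [hy] using hx
      have hynorm : ‖y‖ ≠ 0 := norm_ne_zero_iff.mpr hyne
      have hmem : (‖y‖⁻¹ • y) ∈ Metric.sphere (0 : EuclideanSpace ℝ ι) 1 := by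
        simp [norm_smul, inv_mul_cancel₀ hynorm]
      have hmin : f x₀ ≤ f (‖y‖⁻¹ • y) := hx₀min hmem
      have hscale : ∀ (c : ℝ) (z : EuclideanSpace ℝ ι), f (c • z) = c^2 * f z := by
        intro c z
        have h1 : (c • z : EuclideanSpace ℝ ι).ofLp = c • z.ofLp := rfl
        simp only [hf, h1]
        rw [Matrix.mulVec_smul, smul_dotProduct, dotProduct_smul]
        simp [smul_eq_mul, sq]; ring
      have hdotnorm : x ⬝ᵥ x = ‖y‖ ^ 2 := by
        rw [hy, EuclideanSpace.real_norm_sq_eq]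
        simp [dotProduct, sq]
      have hyeq : (‖y‖ • (‖y‖⁻¹ • y) : EuclideanSpace ℝ ι) = y := smul_inv_smul₀ hynorm _
      have h2 : f y = ‖y‖^2 * f (‖y‖⁻¹ • y) := by
        conv_lhs => rw [← hyeq]
        exact hscale _ _
      have h3 : ‖y‖^2 * f x₀ ≤ ‖y‖^2 * f (‖y‖⁻¹ • y) :=
        mul_le_mul_of_nonneg_left hmin (sq_nonneg _)
      have h4 : f y = x ⬝ᵥ M *ᵥ x := rfl
      rw [hdotnorm]
      calc f x₀ * ‖y‖^2 = ‖y‖^2 * f x₀ := by ring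
        _ ≤ ‖y‖^2 * f (‖y‖⁻¹ • y) := h3
        _ = f y := h2.symm
        _ = x ⬝ᵥ M *ᵥ x := h4

private lemma quad_conj {κ : Type*} [Fintype κ] (M : Matrix κ ι ℝ) (N : Matrix κ κ ℝ)
    (x : ι → ℝ) :
    x ⬝ᵥ (Mᵀ * N * M) *ᵥ x = (M *ᵥ x) ⬝ᵥ N *ᵥ (M *ᵥ x) := by
  rw [Matrix.mul_assoc, ← Matrix.mulVec_mulVec, Matrix.dotProduct_mulVec,
    Matrix.vecMul_transpose, ← Matrix.mulVec_mulVec]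


private lemma kron_quad_nonneg {T q : ℕ} {R : Matrix (Fin q) (Fin q) ℝ} (hR : R.PosSemidef)
    (z : Fin T × Fin q → ℝ) :
    0 ≤ z ⬝ᵥ ((1 : Matrix (Fin T) (Fin T) ℝ) ⊗ₖ R) *ᵥ z := by
  have key : z ⬝ᵥ ((1 : Matrix (Fin T) (Fin T) ℝ) ⊗ₖ R) *ᵥ z
      = ∑ t : Fin T, (fun i => z (t, i)) ⬝ᵥ R *ᵥ (fun i => z (t, i)) := by
    simp only [dotProduct, Matrix.mulVec, Fintype.sum_prod_type,
      Matrix.kroneckerMap_apply, Matrix.one_apply, ite_mul, one_mul, zero_mul]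
    refine Finset.sum_congr rfl fun t _ => ?_
    refine Finset.sum_congr rfl fun i _ => ?_
    congr 1
    rw [Finset.sum_eq_single t]
    · simp
    · intro s _ hs
      simp [Ne.symm hs]
    · simp
  rw [key]
  refine Finset.sum_nonneg fun t _ => ?_
  have := hR.dotProduct_mulVec_nonneg (fun i => z (t, i))
  rwa [show star (fun i => z (t, i)) = (fun i => z (t, i)) from
    funext fun i => star_trivial _] at this

private lemma ptil_quad_zero_nonneg {m q : ℕ} (T : ℕ) (Q : Matrix (Fin m) (Fin m) ℝ)
    (S : Matrix (Fin m) (Fin q) ℝ) {R : Matrix (Fin q) (Fin q) ℝ} (hR : R.PosSemidef)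
    (zv : Fin T × Fin q → ℝ) :
    0 ≤ Sum.elim (0 : Fin T × Fin m → ℝ) zv ⬝ᵥ (Ptil T Q S R) *ᵥ Sum.elim 0 zv := by
  have h : Sum.elim (0 : Fin T × Fin m → ℝ) zv ⬝ᵥ (Ptil T Q S R) *ᵥ Sum.elim 0 zv
      = zv ⬝ᵥ ((1 : Matrix (Fin T) (Fin T) ℝ) ⊗ₖ R) *ᵥ zv := by
    rw [Ptil, Matrix.fromBlocks_mulVec, sumElim_dotProduct_sumElim]
    simp
  rw [h]
  exact kron_quad_nonneg hR zv

private lemma Ltil_quad {n₁ n₂ m q : ℕ} (T : ℕ)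
    (A : Matrix (Fin n₁ ⊕ Fin n₂) (Fin n₁ ⊕ Fin n₂) ℝ)
    (B : Matrix (Fin n₁ ⊕ Fin n₂) (Fin m) ℝ)
    (C : Matrix (Fin q) (Fin n₁ ⊕ Fin n₂) ℝ) (D : Matrix (Fin q) (Fin m) ℝ)
    (Q : Matrix (Fin m) (Fin m) ℝ) (S : Matrix (Fin m) (Fin q) ℝ)
    (R : Matrix (Fin q) (Fin q) ℝ)
    (Pu : Matrix (Fin n₂ ⊕ Fin n₂) (Fin n₂ ⊕ Fin n₂) ℝ)
    (X : Matrix (Fin n₁ ⊕ Fin n₂) (Fin n₁ ⊕ Fin n₂) ℝ) (τ : ℝ)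
    (ηv : (Fin n₁ ⊕ Fin n₂) → ℝ) (wv : Fin T × Fin m → ℝ) (uv : Fin n₂ → ℝ) :
    Sum.elim ηv (Sum.elim wv uv) ⬝ᵥ
        (Ltil T A B C D Q S R Pu X τ) *ᵥ Sum.elim ηv (Sum.elim wv uv) =
      (-(ηv ⬝ᵥ X *ᵥ ηv) +
        ((A ^ T) *ᵥ ηv + (Btil T A B) *ᵥ wv + (Butil T A) *ᵥ uv) ⬝ᵥ
          X *ᵥ ((A ^ T) *ᵥ ηv + (Btil T A B) *ᵥ wv + (Butil T A) *ᵥ uv)) +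
      (Sum.elim wv ((Ctil T A C) *ᵥ ηv + (Dtil T A B C D) *ᵥ wv + (Dutil T A C) *ᵥ uv) ⬝ᵥ
        (Ptil T Q S R) *ᵥ
          Sum.elim wv ((Ctil T A C) *ᵥ ηv + (Dtil T A B C D) *ᵥ wv + (Dutil T A C) *ᵥ uv)) +
      τ * (Sum.elim uv ((Cu n₁ n₂) *ᵥ ηv) ⬝ᵥ Pu *ᵥ Sum.elim uv ((Cu n₁ n₂) *ᵥ ηv)) := by
  rw [Ltil, Matrix.add_mulVec, Matrix.add_mulVec, dotProduct_add, dotProduct_add,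
    quad_conj, quad_conj, quad_conj]
  simp only [Matrix.fromBlocks_mulVec, Sum.elim_comp_inl, Sum.elim_comp_inr,
    Matrix.fromCols_mulVec_sumElim, Matrix.one_mulVec, Matrix.zero_mulVec,
    Matrix.mulVec_zero, add_zero, zero_add, sumElim_dotProduct_sumElim,
    Matrix.neg_mulVec, dotProduct_neg, Matrix.smul_mulVec,
    dotProduct_smul, smul_eq_mul, add_assoc]


private lemma young_div {c ε a b : ℝ} (hε : 0 < ε) :
    2 * (c * (a * b)) ≤ ε / 2 * a ^ 2 + 2 * c ^ 2 / ε * b ^ 2 := by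
  have h1 : 0 ≤ (ε * a - 2 * c * b) ^ 2 := sq_nonneg _
  have h2 : 0 ≤ ((ε * a - 2 * c * b) ^ 2) / (2 * ε) := by positivity
  have h3 : ((ε * a - 2 * c * b) ^ 2) / (2 * ε)
      = ε / 2 * a ^ 2 + 2 * c ^ 2 / ε * b ^ 2 - 2 * (c * (a * b)) := by
    field_simp
    ring
  linarith [h3 ▸ h2]

private lemma quad_split_lower {ι : Type*} [Fintype ι] (K : Matrix ι ι ℝ) (c ε : ℝ)
    (hc : 0 ≤ c) (hε : 0 < ε)
    (hcb : ∀ x y : ι → ℝ, |x ⬝ᵥ K *ᵥ y| ≤ c * Real.sqrt (x ⬝ᵥ x) * Real.sqrt (y ⬝ᵥ y))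
    (a b : ι → ℝ) (h0 : 0 ≤ a ⬝ᵥ K *ᵥ a) (hab : a ⬝ᵥ b = 0) :
    -(ε / 2 * ((a + b) ⬝ᵥ (a + b)) + (2 * c ^ 2 / ε + c) * (b ⬝ᵥ b))
      ≤ (a + b) ⬝ᵥ K *ᵥ (a + b) := by
  have hexp : (a + b) ⬝ᵥ K *ᵥ (a + b)
      = a ⬝ᵥ K *ᵥ a + a ⬝ᵥ K *ᵥ b + b ⬝ᵥ K *ᵥ a + b ⬝ᵥ K *ᵥ b := by
    rw [Matrix.mulVec_add, dotProduct_add, add_dotProduct,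
      add_dotProduct]
    ring
  have hdotexp : (a + b) ⬝ᵥ (a + b) = a ⬝ᵥ a + b ⬝ᵥ b := by
    rw [dotProduct_add, add_dotProduct, add_dotProduct, hab,
      dotProduct_comm b a, hab]
    ring
  set α := Real.sqrt (a ⬝ᵥ a) with hα
  set β := Real.sqrt (b ⬝ᵥ b) with hβ
  have hα2 : α ^ 2 = a ⬝ᵥ a := sqrt_dot_sq a
  have hβ2 : β ^ 2 = b ⬝ᵥ b := sqrt_dot_sq b
  have h1 := (abs_le.mp (hcb a b)).1
  have h2 := (abs_le.mp (hcb b a)).1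
  have h3 := (abs_le.mp (hcb b b)).1
  rw [← hα] at h1 h2
  rw [← hβ] at h1 h2 h3
  have h3' : -(c * (b ⬝ᵥ b)) ≤ b ⬝ᵥ K *ᵥ b := by
    rw [← hβ2]
    nlinarith [h3]
  have hy := young_div (c := c) (a := α) (b := β) hε
  rw [hα2, hβ2] at hy
  have hbb : 0 ≤ b ⬝ᵥ b := dot_self_nonneg' b
  have haa : 0 ≤ a ⬝ᵥ a := dot_self_nonneg' a
  rw [hexp, hdotexp]
  nlinarith [hy, h0, h1, h2, h3', mul_nonneg hε.le hbb, mul_nonneg hε.le haa]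

/-- If `R ⪰ 0`, `γ ≥ 0`, and the robust LMI `L̃(X, τ) ≺ 0` with the bootstrapping
multiplier `P_u = diag(-2I, 2γ²I)` is feasible for some symmetric `X ≻ 0` and `τ > 0`,
then the perturbed lifted closed loop satisfies robust quadratic performance specified
by `P̃`, with a margin `ε > 0` independent of the sector-bounded uncertainties `Δ_k`. -/
theorem robust_quadperf_bootstrapping {n₁ n₂ m q : ℕ} (T : ℕ) (hT : 1 ≤ T)
    (A : Matrix (Fin n₁ ⊕ Fin n₂) (Fin n₁ ⊕ Fin n₂) ℝ)
    (B : Matrix (Fin n₁ ⊕ Fin n₂) (Fin m) ℝ)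
    (C : Matrix (Fin q) (Fin n₁ ⊕ Fin n₂) ℝ) (D : Matrix (Fin q) (Fin m) ℝ)
    (Q : Matrix (Fin m) (Fin m) ℝ) (S : Matrix (Fin m) (Fin q) ℝ)
    (R : Matrix (Fin q) (Fin q) ℝ) (hQ : Q.IsSymm) (hR : R.IsSymm)
    (hRpsd : R.PosSemidef) (γ : ℝ) (hγ : 0 ≤ γ)
    (hLMI : ∃ (X : Matrix (Fin n₁ ⊕ Fin n₂) (Fin n₁ ⊕ Fin n₂) ℝ) (τ : ℝ),
      X.IsSymm ∧ X.PosDef ∧ 0 < τ ∧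
      (-(Ltil T A B C D Q S R
          (Matrix.fromBlocks ((-2 : ℝ) • 1) 0 0 ((2 * γ ^ 2) • 1)) X τ)).PosDef) :
    ∃ ε > (0 : ℝ), ∀ Δ : ℕ → (Fin n₂ → ℝ) → (Fin n₂ → ℝ),
      (∀ (k : ℕ) (v : Fin n₂ → ℝ),
        Real.sqrt (Δ k v ⬝ᵥ Δ k v) ≤ γ * Real.sqrt (v ⬝ᵥ v)) →
      ((∀ η z, PerturbedTraj T A B C D Δ η (fun _ => 0) z →
          Tendsto η atTop (𝓝 0)) ∧
       (∀ η w z, PerturbedTraj T A B C D Δ η w z → η 0 = 0 →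
          Summable (fun k => w k ⬝ᵥ w k) →
          ∃ l : ℝ,
            Tendsto (fun N => ∑ k ∈ Finset.range N,
              Sum.elim (w k) (z k) ⬝ᵥ
                (Ptil T Q S R).mulVec (Sum.elim (w k) (z k))) atTop (𝓝 l) ∧
            l ≤ -ε * ∑' k, w k ⬝ᵥ w k)) := by
  classical
  obtain ⟨X, τ, hXs, hXpd, hτ, hLpd⟩ := hLMI
  obtain ⟨ε, hε, hquad⟩ := exists_quad_lower _ hLpd
  have hquad' : ∀ ζ : (Fin n₁ ⊕ Fin n₂) ⊕ ((Fin T × Fin m) ⊕ Fin n₂) → ℝ,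
      ζ ⬝ᵥ (Ltil T A B C D Q S R
          (Matrix.fromBlocks ((-2 : ℝ) • 1) 0 0 ((2 * γ ^ 2) • 1)) X τ) *ᵥ ζ
        ≤ -ε * (ζ ⬝ᵥ ζ) := by
    intro ζ
    have h := hquad ζ
    rw [Matrix.neg_mulVec, dotProduct_neg] at h
    linarith
  have hXpsd : ∀ x : (Fin n₁ ⊕ Fin n₂) → ℝ, 0 ≤ x ⬝ᵥ X *ᵥ x := by
    intro x
    have := hXpd.posSemidef.dotProduct_mulVec_nonneg x
    rwa [show star x = x from funext fun i => star_trivial _] at this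
  refine ⟨ε, hε, fun Δ hΔ => ?_⟩
  have hu2 : ∀ (k : ℕ) (v : Fin n₂ → ℝ), (Δ k v) ⬝ᵥ (Δ k v) ≤ γ ^ 2 * (v ⬝ᵥ v) := by
    intro k v
    have h := hΔ k v
    have h1 := sqrt_dot_sq (Δ k v)
    have h2 := sqrt_dot_sq v
    nlinarith [Real.sqrt_nonneg (Δ k v ⬝ᵥ Δ k v), Real.sqrt_nonneg (v ⬝ᵥ v),
      mul_nonneg hγ (Real.sqrt_nonneg (v ⬝ᵥ v))]
  have hstep : ∀ (η : ℕ → (Fin n₁ ⊕ Fin n₂) → ℝ) (w : ℕ → Fin T × Fin m → ℝ)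
      (z : ℕ → Fin T × Fin q → ℝ), PerturbedTraj T A B C D Δ η w z → ∀ k : ℕ,
      (η (k+1) ⬝ᵥ X *ᵥ η (k+1)) - (η k ⬝ᵥ X *ᵥ η k)
          + Sum.elim (w k) (z k) ⬝ᵥ (Ptil T Q S R) *ᵥ Sum.elim (w k) (z k)
        ≤ -ε * (Sum.elim (η k) (Sum.elim (w k) (Δ k ((Cu n₁ n₂) *ᵥ η k))) ⬝ᵥ
            Sum.elim (η k) (Sum.elim (w k) (Δ k ((Cu n₁ n₂) *ᵥ η k)))) := by
    intro η w z htr k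
    have h1 := Ltil_quad T A B C D Q S R
      (Matrix.fromBlocks ((-2 : ℝ) • 1) 0 0 ((2 * γ ^ 2) • 1)) X τ
      (η k) (w k) (Δ k ((Cu n₁ n₂) *ᵥ η k))
    rw [← (htr k).1, ← (htr k).2] at h1
    have hmult : Sum.elim (Δ k ((Cu n₁ n₂) *ᵥ η k)) ((Cu n₁ n₂) *ᵥ η k) ⬝ᵥ
        (Matrix.fromBlocks ((-2 : ℝ) • 1) 0 0 ((2 * γ ^ 2) • 1) :
            Matrix (Fin n₂ ⊕ Fin n₂) (Fin n₂ ⊕ Fin n₂) ℝ) *ᵥ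
          Sum.elim (Δ k ((Cu n₁ n₂) *ᵥ η k)) ((Cu n₁ n₂) *ᵥ η k)
        = -2 * ((Δ k ((Cu n₁ n₂) *ᵥ η k)) ⬝ᵥ (Δ k ((Cu n₁ n₂) *ᵥ η k)))
          + 2 * γ ^ 2 * (((Cu n₁ n₂) *ᵥ η k) ⬝ᵥ ((Cu n₁ n₂) *ᵥ η k)) := by
      rw [Matrix.fromBlocks_mulVec]
      simp only [Sum.elim_comp_inl, Sum.elim_comp_inr, Matrix.zero_mulVec, add_zero, zero_add,
        Matrix.smul_mulVec, Matrix.one_mulVec, sumElim_dotProduct_sumElim,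
        dotProduct_smul, smul_eq_mul]
    have hmult0 : 0 ≤ τ * (Sum.elim (Δ k ((Cu n₁ n₂) *ᵥ η k)) ((Cu n₁ n₂) *ᵥ η k) ⬝ᵥ
        (Matrix.fromBlocks ((-2 : ℝ) • 1) 0 0 ((2 * γ ^ 2) • 1) :
            Matrix (Fin n₂ ⊕ Fin n₂) (Fin n₂ ⊕ Fin n₂) ℝ) *ᵥ
          Sum.elim (Δ k ((Cu n₁ n₂) *ᵥ η k)) ((Cu n₁ n₂) *ᵥ η k)) := by
      rw [hmult]
      have := hu2 k ((Cu n₁ n₂) *ᵥ η k)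
      nlinarith [hτ.le]
    have h2 := hquad' (Sum.elim (η k) (Sum.elim (w k) (Δ k ((Cu n₁ n₂) *ᵥ η k))))
    rw [h1] at h2
    linarith
  have hζdot : ∀ (a : (Fin n₁ ⊕ Fin n₂) → ℝ) (b : Fin T × Fin m → ℝ) (d : Fin n₂ → ℝ),
      Sum.elim a (Sum.elim b d) ⬝ᵥ Sum.elim a (Sum.elim b d)
        = a ⬝ᵥ a + (b ⬝ᵥ b + d ⬝ᵥ d) := by
    intro a b d
    rw [sumElim_dotProduct_sumElim, sumElim_dotProduct_sumElim]
  constructor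
  · -- Part (i): stability
    intro η z htr
    have hdecr : ∀ k : ℕ, ε * (η k ⬝ᵥ η k)
        ≤ (η k ⬝ᵥ X *ᵥ η k) - (η (k+1) ⬝ᵥ X *ᵥ η (k+1)) := by
      intro k
      have h := hstep η (fun _ => 0) z htr k
      have hsnn : 0 ≤ Sum.elim (0 : Fin T × Fin m → ℝ) (z k) ⬝ᵥ
          (Ptil T Q S R) *ᵥ Sum.elim (0 : Fin T × Fin m → ℝ) (z k) :=
        ptil_quad_zero_nonneg T Q S hRpsd (z k)
      rw [hζdot] at h
      rw [zero_dotProduct, zero_add] at h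
      have hΔnn := dot_self_nonneg' (Δ k ((Cu n₁ n₂) *ᵥ η k))
      nlinarith [mul_nonneg hε.le hΔnn, hsnn]
    have hsum : ∀ N : ℕ, ε * ∑ k ∈ Finset.range N, (η k ⬝ᵥ η k) ≤ η 0 ⬝ᵥ X *ᵥ η 0 := by
      intro N
      have h := Finset.sum_le_sum (fun k (_ : k ∈ Finset.range N) => hdecr k)
      rw [Finset.sum_range_sub' (fun k => η k ⬝ᵥ X *ᵥ η k)] at h
      rw [Finset.mul_sum]
      linarith [hXpsd (η N)]
    have hsummable : Summable (fun k => η k ⬝ᵥ η k) := by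
      refine summable_of_sum_range_le (c := (η 0 ⬝ᵥ X *ᵥ η 0) / ε)
        (fun k => dot_self_nonneg' _) (fun N => ?_)
      rw [le_div_iff₀ hε]
      linarith [hsum N]
    have h0 : Tendsto (fun k => η k ⬝ᵥ η k) atTop (𝓝 0) := hsummable.tendsto_atTop_zero
    have hsqrt : Tendsto (fun k => Real.sqrt (η k ⬝ᵥ η k)) atTop (𝓝 0) := by
      have := (Real.continuous_sqrt.tendsto 0).comp h0
      simpa [Function.comp_def] using this
    have hsqrtneg : Tendsto (fun k => -Real.sqrt (η k ⬝ᵥ η k)) atTop (𝓝 0) := by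
      simpa using hsqrt.neg
    rw [tendsto_pi_nhds]
    intro i
    have := tendsto_of_tendsto_of_tendsto_of_le_of_le (f := fun k => η k i)
      hsqrtneg hsqrt
      (fun k => (abs_le.mp (abs_le_sqrt_dot (η k) i)).1)
      (fun k => (abs_le.mp (abs_le_sqrt_dot (η k) i)).2)
    simpa using this
  · -- Part (ii): quadratic performance
    intro η w z htr h00 hw
    obtain ⟨c, hc0, hcb⟩ := bilin_bound
      ((Matrix.fromBlocks 0 (Matrix.fromCols (1 : Matrix (Fin T × Fin m) (Fin T × Fin m) ℝ) 0) (Ctil T A C)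
          (Matrix.fromCols (Dtil T A B C D) (Dutil T A C)))ᵀ *
        (Ptil T Q S R) *
        (Matrix.fromBlocks 0 (Matrix.fromCols (1 : Matrix (Fin T × Fin m) (Fin T × Fin m) ℝ) 0) (Ctil T A C)
          (Matrix.fromCols (Dtil T A B C D) (Dutil T A C))))
    have hV0 : η 0 ⬝ᵥ X *ᵥ η 0 = 0 := by rw [h00]; simp
    have hsK : ∀ k : ℕ, Sum.elim (w k) (z k) ⬝ᵥ (Ptil T Q S R) *ᵥ Sum.elim (w k) (z k)
        = Sum.elim (η k) (Sum.elim (w k) (Δ k ((Cu n₁ n₂) *ᵥ η k))) ⬝ᵥ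
          ((Matrix.fromBlocks 0 (Matrix.fromCols (1 : Matrix (Fin T × Fin m) (Fin T × Fin m) ℝ) 0) (Ctil T A C)
              (Matrix.fromCols (Dtil T A B C D) (Dutil T A C)))ᵀ *
            (Ptil T Q S R) *
            (Matrix.fromBlocks 0 (Matrix.fromCols (1 : Matrix (Fin T × Fin m) (Fin T × Fin m) ℝ) 0) (Ctil T A C)
              (Matrix.fromCols (Dtil T A B C D) (Dutil T A C)))) *ᵥ
          Sum.elim (η k) (Sum.elim (w k) (Δ k ((Cu n₁ n₂) *ᵥ η k))) := by
      intro k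
      rw [quad_conj]
      have hM : (Matrix.fromBlocks 0 (Matrix.fromCols (1 : Matrix (Fin T × Fin m) (Fin T × Fin m) ℝ) 0) (Ctil T A C)
            (Matrix.fromCols (Dtil T A B C D) (Dutil T A C))) *ᵥ
          Sum.elim (η k) (Sum.elim (w k) (Δ k ((Cu n₁ n₂) *ᵥ η k)))
          = Sum.elim (w k) (z k) := by
        rw [(htr k).2]
        simp only [Matrix.fromBlocks_mulVec, Sum.elim_comp_inl, Sum.elim_comp_inr,
          Matrix.zero_mulVec, Matrix.fromCols_mulVec_sumElim, Matrix.one_mulVec,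
          add_zero, zero_add, add_assoc]
      rw [hM]
    have hsplit : ∀ k : ℕ, Sum.elim (η k) (Sum.elim (w k) (Δ k ((Cu n₁ n₂) *ᵥ η k)))
        = Sum.elim (η k) (Sum.elim (0 : Fin T × Fin m → ℝ) (Δ k ((Cu n₁ n₂) *ᵥ η k)))
          + Sum.elim (0 : (Fin n₁ ⊕ Fin n₂) → ℝ)
              (Sum.elim (w k) (0 : Fin n₂ → ℝ)) := by
      intro k
      funext i
      rcases i with i | i
      · simp
      · rcases i with i | i <;> simp
    have horth : ∀ k : ℕ,
        Sum.elim (η k) (Sum.elim (0 : Fin T × Fin m → ℝ) (Δ k ((Cu n₁ n₂) *ᵥ η k))) ⬝ᵥ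
          Sum.elim (0 : (Fin n₁ ⊕ Fin n₂) → ℝ) (Sum.elim (w k) (0 : Fin n₂ → ℝ)) = 0 := by
      intro k
      rw [sumElim_dotProduct_sumElim, sumElim_dotProduct_sumElim]
      simp
    have hq0 : ∀ k : ℕ, 0 ≤
        Sum.elim (η k) (Sum.elim (0 : Fin T × Fin m → ℝ) (Δ k ((Cu n₁ n₂) *ᵥ η k))) ⬝ᵥ
          ((Matrix.fromBlocks 0 (Matrix.fromCols (1 : Matrix (Fin T × Fin m) (Fin T × Fin m) ℝ) 0) (Ctil T A C)
              (Matrix.fromCols (Dtil T A B C D) (Dutil T A C)))ᵀ *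
            (Ptil T Q S R) *
            (Matrix.fromBlocks 0 (Matrix.fromCols (1 : Matrix (Fin T × Fin m) (Fin T × Fin m) ℝ) 0) (Ctil T A C)
              (Matrix.fromCols (Dtil T A B C D) (Dutil T A C)))) *ᵥ
          Sum.elim (η k) (Sum.elim (0 : Fin T × Fin m → ℝ) (Δ k ((Cu n₁ n₂) *ᵥ η k))) := by
      intro k
      rw [quad_conj]
      have hM0 : (Matrix.fromBlocks 0 (Matrix.fromCols (1 : Matrix (Fin T × Fin m) (Fin T × Fin m) ℝ) 0) (Ctil T A C)
            (Matrix.fromCols (Dtil T A B C D) (Dutil T A C))) *ᵥ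
          Sum.elim (η k) (Sum.elim (0 : Fin T × Fin m → ℝ) (Δ k ((Cu n₁ n₂) *ᵥ η k)))
          = Sum.elim (0 : Fin T × Fin m → ℝ)
              ((Ctil T A C) *ᵥ η k + (Dutil T A C) *ᵥ (Δ k ((Cu n₁ n₂) *ᵥ η k))) := by
        simp only [Matrix.fromBlocks_mulVec, Sum.elim_comp_inl, Sum.elim_comp_inr,
          Matrix.zero_mulVec, Matrix.fromCols_mulVec_sumElim, Matrix.one_mulVec,
          Matrix.mulVec_zero, add_zero, zero_add]
      rw [hM0]
      exact ptil_quad_zero_nonneg T Q S hRpsd _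
    have hζwdot : ∀ k : ℕ, Sum.elim (0 : (Fin n₁ ⊕ Fin n₂) → ℝ)
          (Sum.elim (w k) (0 : Fin n₂ → ℝ)) ⬝ᵥ
        Sum.elim (0 : (Fin n₁ ⊕ Fin n₂) → ℝ) (Sum.elim (w k) (0 : Fin n₂ → ℝ))
        = w k ⬝ᵥ w k := by
      intro k
      rw [sumElim_dotProduct_sumElim, sumElim_dotProduct_sumElim]
      simp
    have hslow : ∀ k : ℕ,
        -(ε / 2 * (Sum.elim (η k) (Sum.elim (w k) (Δ k ((Cu n₁ n₂) *ᵥ η k))) ⬝ᵥ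
            Sum.elim (η k) (Sum.elim (w k) (Δ k ((Cu n₁ n₂) *ᵥ η k))))
          + (2 * c ^ 2 / ε + c) * (w k ⬝ᵥ w k))
        ≤ Sum.elim (w k) (z k) ⬝ᵥ (Ptil T Q S R) *ᵥ Sum.elim (w k) (z k) := by
      intro k
      rw [hsK k, hsplit k, ← hζwdot k]
      exact quad_split_lower _ c ε hc0 hε hcb _ _ (hq0 k) (horth k)
    have hsumN : ∀ N : ℕ, (η N ⬝ᵥ X *ᵥ η N)
        + ∑ k ∈ Finset.range N,
            Sum.elim (w k) (z k) ⬝ᵥ (Ptil T Q S R) *ᵥ Sum.elim (w k) (z k)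
        ≤ -ε * ∑ k ∈ Finset.range N,
            (Sum.elim (η k) (Sum.elim (w k) (Δ k ((Cu n₁ n₂) *ᵥ η k))) ⬝ᵥ
              Sum.elim (η k) (Sum.elim (w k) (Δ k ((Cu n₁ n₂) *ᵥ η k)))) := by
      intro N
      have h := Finset.sum_le_sum (fun k (_ : k ∈ Finset.range N) => hstep η w z htr k)
      rw [Finset.sum_add_distrib, Finset.sum_range_sub (fun k => η k ⬝ᵥ X *ᵥ η k),
        ← Finset.mul_sum, hV0] at h
      linarith
    have hwnn : ∀ k : ℕ, 0 ≤ w k ⬝ᵥ w k := fun k => dot_self_nonneg' _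
    have hζnn : ∀ k : ℕ, 0 ≤
        Sum.elim (η k) (Sum.elim (w k) (Δ k ((Cu n₁ n₂) *ᵥ η k))) ⬝ᵥ
          Sum.elim (η k) (Sum.elim (w k) (Δ k ((Cu n₁ n₂) *ᵥ η k))) :=
      fun k => dot_self_nonneg' _
    have hwle : ∀ k : ℕ, w k ⬝ᵥ w k ≤
        Sum.elim (η k) (Sum.elim (w k) (Δ k ((Cu n₁ n₂) *ᵥ η k))) ⬝ᵥ
          Sum.elim (η k) (Sum.elim (w k) (Δ k ((Cu n₁ n₂) *ᵥ η k))) := by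
      intro k
      rw [hζdot]
      have h1 := dot_self_nonneg' (η k)
      have h2 := dot_self_nonneg' (Δ k ((Cu n₁ n₂) *ᵥ η k))
      linarith
    have hC1 : 0 ≤ 2 * c ^ 2 / ε + c := by positivity
    have hwsumle : ∀ N : ℕ, ∑ k ∈ Finset.range N, (w k ⬝ᵥ w k) ≤ ∑' k, w k ⬝ᵥ w k :=
      fun N => Summable.sum_le_tsum (Finset.range N) (fun k _ => hwnn k) hw
    have hζbound : ∀ N : ℕ, ε / 2 * ∑ k ∈ Finset.range N,
        (Sum.elim (η k) (Sum.elim (w k) (Δ k ((Cu n₁ n₂) *ᵥ η k))) ⬝ᵥ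
          Sum.elim (η k) (Sum.elim (w k) (Δ k ((Cu n₁ n₂) *ᵥ η k))))
        ≤ (2 * c ^ 2 / ε + c) * ∑' k, w k ⬝ᵥ w k := by
      intro N
      have h1 := hsumN N
      have h2 := Finset.sum_le_sum (fun k (_ : k ∈ Finset.range N) => hslow k)
      have h3 : ∑ k ∈ Finset.range N,
          -(ε / 2 * (Sum.elim (η k) (Sum.elim (w k) (Δ k ((Cu n₁ n₂) *ᵥ η k))) ⬝ᵥ
              Sum.elim (η k) (Sum.elim (w k) (Δ k ((Cu n₁ n₂) *ᵥ η k))))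
            + (2 * c ^ 2 / ε + c) * (w k ⬝ᵥ w k))
          = -(ε / 2 * ∑ k ∈ Finset.range N,
              (Sum.elim (η k) (Sum.elim (w k) (Δ k ((Cu n₁ n₂) *ᵥ η k))) ⬝ᵥ
                Sum.elim (η k) (Sum.elim (w k) (Δ k ((Cu n₁ n₂) *ᵥ η k))))
            + (2 * c ^ 2 / ε + c) * ∑ k ∈ Finset.range N, (w k ⬝ᵥ w k)) := by
        simp only [neg_add, Finset.sum_add_distrib, Finset.sum_neg_distrib, Finset.mul_sum]
      rw [h3] at h2
      have h4 := mul_le_mul_of_nonneg_left (hwsumle N) hC1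
      linarith [hXpsd (η N)]
    have hζsummable : Summable (fun k =>
        Sum.elim (η k) (Sum.elim (w k) (Δ k ((Cu n₁ n₂) *ᵥ η k))) ⬝ᵥ
          Sum.elim (η k) (Sum.elim (w k) (Δ k ((Cu n₁ n₂) *ᵥ η k)))) := by
      refine summable_of_sum_range_le
        (c := ((2 * c ^ 2 / ε + c) * ∑' k, w k ⬝ᵥ w k) / (ε / 2))
        (fun k => hζnn k) (fun N => ?_)
      rw [le_div_iff₀ (by positivity : (0:ℝ) < ε / 2)]
      linarith [hζbound N]
    have hsabs : ∀ k : ℕ,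
        |Sum.elim (w k) (z k) ⬝ᵥ (Ptil T Q S R) *ᵥ Sum.elim (w k) (z k)|
        ≤ c * (Sum.elim (η k) (Sum.elim (w k) (Δ k ((Cu n₁ n₂) *ᵥ η k))) ⬝ᵥ
            Sum.elim (η k) (Sum.elim (w k) (Δ k ((Cu n₁ n₂) *ᵥ η k)))) := by
      intro k
      rw [hsK k]
      have h := hcb (Sum.elim (η k) (Sum.elim (w k) (Δ k ((Cu n₁ n₂) *ᵥ η k))))
        (Sum.elim (η k) (Sum.elim (w k) (Δ k ((Cu n₁ n₂) *ᵥ η k))))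
      rwa [mul_assoc, Real.mul_self_sqrt (dot_self_nonneg' _)] at h
    have hssum : Summable (fun k =>
        Sum.elim (w k) (z k) ⬝ᵥ (Ptil T Q S R) *ᵥ Sum.elim (w k) (z k)) := by
      refine Summable.of_abs ?_
      exact Summable.of_nonneg_of_le (fun k => abs_nonneg _) hsabs (hζsummable.mul_left c)
    refine ⟨∑' k, Sum.elim (w k) (z k) ⬝ᵥ (Ptil T Q S R) *ᵥ Sum.elim (w k) (z k), ?_, ?_⟩
    · exact hssum.hasSum.tendsto_sum_nat
    · have hle : ∀ N : ℕ,
          ∑ k ∈ Finset.range N, Sum.elim (w k) (z k) ⬝ᵥ (Ptil T Q S R) *ᵥ Sum.elim (w k) (z k)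
          ≤ -ε * ∑ k ∈ Finset.range N, (w k ⬝ᵥ w k) := by
        intro N
        have h1 := hsumN N
        have h2 := Finset.sum_le_sum (fun k (_ : k ∈ Finset.range N) => hwle k)
        have h4 := mul_le_mul_of_nonneg_left h2 hε.le
        linarith [hXpsd (η N)]
      exact le_of_tendsto_of_tendsto' hssum.hasSum.tendsto_sum_nat
        ((hw.hasSum.tendsto_sum_nat).const_mul (-ε)) hle
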